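/- Let μ > 0 and fix Λ > 0. Then lim_{k→0⁺} ∫_k^Λ ∫_{−k}^{k} (σ(p)·σ(l) − γ(p)·γ(l))² · p · l / (8k · (e(p) + e(l))) ds dt = ∫_0^Λ t²/(32·e(t/2)) dt, where p = (t+s)/2 and l = (t−s)/2; moreover the right-hand side is a finite strictly positive real number. -/

import Mathlib

open Real Filter Asymptotics Topology MeasureTheory

/-- Bogoliubov dispersion relation (contact interaction). -/
noncomputable def disp (μ k : ℝ) : ℝ := Real.sqrt (k^4/4 + μ*k^2)

/-- Bogoliubov coefficient σ. -/
noncomputable def sig (μ k : ℝ) : ℝ :=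
  Real.sqrt ((Real.sqrt ((disp μ k)^2 + μ^2) + disp μ k) / (2 * disp μ k))

/-- Bogoliubov coefficient γ. -/
noncomputable def gam (μ k : ℝ) : ℝ :=
  Real.sqrt ((Real.sqrt ((disp μ k)^2 + μ^2) - disp μ k) / (2 * disp μ k))

noncomputable def EE (μ x : ℝ) : ℝ := Real.sqrt ((disp μ x)^2 + μ^2)

lemma disp_eq (μ : ℝ) {x : ℝ} (hx : 0 ≤ x) :
    disp μ x = x * Real.sqrt (μ + x^2/4) := by
  rw [disp, show x^4/4 + μ*x^2 = x^2 * (μ + x^2/4) by ring,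
    Real.sqrt_mul (sq_nonneg x), Real.sqrt_sq hx]

lemma disp_nonneg (μ x : ℝ) : 0 ≤ disp μ x := Real.sqrt_nonneg _

lemma disp_pos {μ x : ℝ} (hμ : 0 < μ) (hx : 0 < x) : 0 < disp μ x := by
  rw [disp_eq μ hx.le]
  exact mul_pos hx (Real.sqrt_pos.2 (by positivity))

lemma disp_ge {μ : ℝ} (hμ : 0 < μ) {x : ℝ} (hx : 0 ≤ x) :
    Real.sqrt μ * x ≤ disp μ x := by
  rw [disp_eq μ hx, mul_comm]
  exact mul_le_mul_of_nonneg_left (Real.sqrt_le_sqrt (by nlinarith [sq_nonneg x])) hx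

lemma sqrtf_le {μ Λ : ℝ} {x : ℝ} (hx : 0 ≤ x) (hxΛ : x ≤ Λ) :
    Real.sqrt (μ + x^2/4) ≤ Real.sqrt (μ + Λ^2/4) := by
  apply Real.sqrt_le_sqrt; nlinarith

lemma disp_le {μ Λ : ℝ} {x : ℝ} (hx : 0 ≤ x) (hxΛ : x ≤ Λ) :
    disp μ x ≤ x * Real.sqrt (μ + Λ^2/4) := by
  rw [disp_eq μ hx]
  exact mul_le_mul_of_nonneg_left (sqrtf_le hx hxΛ) hx

lemma EE_sq (μ x : ℝ) : (EE μ x)^2 = (disp μ x)^2 + μ^2 :=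
  Real.sq_sqrt (by positivity)

lemma EE_nonneg (μ x : ℝ) : 0 ≤ EE μ x := Real.sqrt_nonneg _

lemma EE_ge_mu {μ : ℝ} (hμ : 0 ≤ μ) (x : ℝ) : μ ≤ EE μ x :=
  (Real.le_sqrt hμ (by positivity)).2 (by nlinarith [sq_nonneg (disp μ x)])

lemma EE_ge_disp (μ x : ℝ) : disp μ x ≤ EE μ x :=
  (Real.le_sqrt (disp_nonneg μ x) (by positivity)).2 (by nlinarith [sq_nonneg μ])

lemma EE_le {μ : ℝ} (hμ : 0 ≤ μ) (x : ℝ) : EE μ x ≤ disp μ x + μ := by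
  rw [EE, show disp μ x + μ = Real.sqrt ((disp μ x + μ)^2) from
    (Real.sqrt_sq (add_nonneg (disp_nonneg μ x) hμ)).symm]
  apply Real.sqrt_le_sqrt
  nlinarith [disp_nonneg μ x]

lemma sig_sq {μ x : ℝ} (hμ : 0 < μ) (hx : 0 < x) :
    (sig μ x)^2 = (EE μ x + disp μ x) / (2 * disp μ x) := by
  rw [sig, Real.sq_sqrt, EE]
  exact div_nonneg (add_nonneg (Real.sqrt_nonneg _) (disp_nonneg _ _))
    (by nlinarith [disp_nonneg μ x])

lemma gam_sq {μ x : ℝ} (hμ : 0 < μ) (hx : 0 < x) :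
    (gam μ x)^2 = (EE μ x - disp μ x) / (2 * disp μ x) := by
  rw [gam, Real.sq_sqrt, EE]
  exact div_nonneg (by have := EE_ge_disp μ x; rw [EE] at this; linarith)
    (by nlinarith [disp_nonneg μ x])

lemma sig_mul_gam {μ x : ℝ} (hμ : 0 < μ) (hx : 0 < x) :
    sig μ x * gam μ x = μ / (2 * disp μ x) := by
  have he := disp_pos hμ hx
  have hEd := EE_ge_disp μ x
  rw [EE] at hEd
  have h1 : (0:ℝ) ≤ (Real.sqrt ((disp μ x)^2 + μ^2) + disp μ x) / (2 * disp μ x) :=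
    div_nonneg (add_nonneg (Real.sqrt_nonneg _) (disp_nonneg _ _)) (by linarith)
  rw [sig, gam, ← Real.sqrt_mul h1]
  have h2 : (Real.sqrt ((disp μ x)^2 + μ^2) + disp μ x) / (2 * disp μ x) *
      ((Real.sqrt ((disp μ x)^2 + μ^2) - disp μ x) / (2 * disp μ x)) = (μ / (2 * disp μ x))^2 := by
    have hE2 : (Real.sqrt ((disp μ x)^2 + μ^2))^2 = (disp μ x)^2 + μ^2 :=
      Real.sq_sqrt (by positivity)
    field_simp
    nlinarith [hE2]
  rw [h2, Real.sqrt_sq (by positivity)]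

lemma bog_identity {μ a b : ℝ} (hμ : 0 < μ) (ha : 0 < a) (hb : 0 < b) :
    (sig μ a * sig μ b - gam μ a * gam μ b)^2 =
      (EE μ a * EE μ b + disp μ a * disp μ b - μ^2) / (2 * (disp μ a * disp μ b)) := by
  have hea := disp_pos hμ ha
  have heb := disp_pos hμ hb
  have h : (sig μ a * sig μ b - gam μ a * gam μ b)^2 =
      (sig μ a)^2 * (sig μ b)^2 + (gam μ a)^2 * (gam μ b)^2
        - 2 * ((sig μ a * gam μ a) * (sig μ b * gam μ b)) := by ring
  rw [h, sig_sq hμ ha, sig_sq hμ hb, gam_sq hμ ha, gam_sq hμ hb,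
    sig_mul_gam hμ ha, sig_mul_gam hμ hb]
  field_simp
  ring


lemma disp_lip {μ Λ : ℝ} (hμ : 0 < μ) (hΛ : 0 < Λ) {a b : ℝ}
    (ha : 0 ≤ a) (hb : 0 ≤ b) (haΛ : a ≤ Λ) (hbΛ : b ≤ Λ) :
    |disp μ b - disp μ a| ≤ (Real.sqrt (μ + Λ^2/4) + Λ^2/(4*Real.sqrt μ)) * |b - a| := by
  set sμ := Real.sqrt μ with hsμdef
  set fa := Real.sqrt (μ + a^2/4) with hfadef
  set fb := Real.sqrt (μ + b^2/4) with hfbdef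
  set fL := Real.sqrt (μ + Λ^2/4) with hfLdef
  have hsμ : 0 < sμ := Real.sqrt_pos.2 hμ
  have hfa2 : fa^2 = μ + a^2/4 := Real.sq_sqrt (by positivity)
  have hfb2 : fb^2 = μ + b^2/4 := Real.sq_sqrt (by positivity)
  have hfa0 : 0 ≤ fa := Real.sqrt_nonneg _
  have hfb0 : 0 ≤ fb := Real.sqrt_nonneg _
  have hfaμ : sμ ≤ fa := Real.sqrt_le_sqrt (by nlinarith)
  have hfbμ : sμ ≤ fb := Real.sqrt_le_sqrt (by nlinarith)
  have hfaL : fa ≤ fL := sqrtf_le ha haΛ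
  have hfbL : fb ≤ fL := sqrtf_le hb hbΛ
  have hkey : (fb - fa) * (fa + fb) = (b^2 - a^2)/4 := by linear_combination hfb2 - hfa2
  have hprod : |fb - fa| * (fa + fb) = |b^2 - a^2| / 4 := by
    rw [← abs_of_nonneg (show (0:ℝ) ≤ fa + fb by linarith), ← abs_mul, hkey, abs_div]
    norm_num
  have hb2a2 : |b^2 - a^2| ≤ 2*Λ*|b - a| := by
    rw [show b^2 - a^2 = (b - a)*(b + a) by ring, abs_mul,
      abs_of_nonneg (by linarith : (0:ℝ) ≤ b + a)]
    nlinarith [abs_nonneg (b - a)]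
  have hfdiff : |fb - fa| ≤ Λ * |b - a| / (4 * sμ) := by
    rw [le_div_iff₀ (by positivity)]
    nlinarith [abs_nonneg (fb - fa), hprod, hb2a2]
  have hd : disp μ b - disp μ a = b*(fb - fa) + (b - a)*fa := by
    rw [disp_eq μ ha, disp_eq μ hb, ← hfadef, ← hfbdef]; ring
  calc |disp μ b - disp μ a| ≤ b * |fb - fa| + |b - a| * fa := by
        rw [hd]
        refine (abs_add_le _ _).trans ?_
        rw [abs_mul, abs_mul, abs_of_nonneg hb, abs_of_nonneg hfa0]
    _ ≤ (fL + Λ^2/(4*sμ)) * |b - a| := by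
        have h1 : b*|fb - fa| ≤ Λ * (Λ * |b - a| / (4 * sμ)) := by
          apply mul_le_mul hbΛ hfdiff (abs_nonneg _) hΛ.le
        have h2 : |b - a| * fa ≤ |b - a| * fL := by
          apply mul_le_mul_of_nonneg_left hfaL (abs_nonneg _)
        have h3 : Λ * (Λ * |b - a| / (4 * sμ)) = Λ^2/(4*sμ) * |b - a| := by
          field_simp
        linarith

set_option maxHeartbeats 1000000 in
lemma core (μ Λ : ℝ) (hμ : 0 < μ) (hΛ : 0 < Λ) : ∃ C : ℝ, 0 < C ∧ ∀ k t s : ℝ,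
    0 < k → k < t → t ≤ Λ → -k < s → s ≤ k →
    |(sig μ ((t+s)/2) * sig μ ((t-s)/2) - gam μ ((t+s)/2) * gam μ ((t-s)/2))^2
        * ((t+s)/2) * ((t-s)/2) / (disp μ ((t+s)/2) + disp μ ((t-s)/2))
      - t^2/(8 * disp μ (t/2))| ≤ C * k := by
  set sμ := Real.sqrt μ with hsμdef
  set fL := Real.sqrt (μ + Λ^2/4) with hfLdef
  have hsμ : 0 < sμ := Real.sqrt_pos.2 hμ
  have hfL : 0 < fL := Real.sqrt_pos.2 (by positivity)
  have hsμ2 : sμ^2 = μ := Real.sq_sqrt hμ.le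
  set Lc := fL + Λ^2/(4*sμ) with hLcdef
  have hLc : 0 < Lc := by positivity
  set Cz := fL*Λ + μ + fL^2*Λ^2/μ with hCzdef
  have hCz : 0 < Cz := by positivity
  refine ⟨fL/(4*μ) + Lc/(4*μ) + Cz^2*Lc^2/(4*μ^3*sμ), by positivity, ?_⟩
  intro k t s hk hkt htΛ hs1 hs2
  have ht : 0 < t := hk.trans hkt
  have ha : 0 < (t+s)/2 := by linarith
  have hb : 0 < (t-s)/2 := by linarith
  have haΛ : (t+s)/2 ≤ Λ := by linarith
  have hbΛ : (t-s)/2 ≤ Λ := by linarith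
  have hm : 0 < t/2 := by linarith
  have hmΛ : t/2 ≤ Λ := by linarith
  have hsk : |s| ≤ k := abs_le.2 ⟨by linarith, hs2⟩
  set ea := disp μ ((t+s)/2) with headef
  set eb := disp μ ((t-s)/2) with hebdef
  set em := disp μ (t/2) with hemdef
  set Ea := EE μ ((t+s)/2) with hEadef
  set Eb := EE μ ((t-s)/2) with hEbdef
  have hea : 0 < ea := disp_pos hμ ha
  have heb : 0 < eb := disp_pos hμ hb
  have hem : 0 < em := disp_pos hμ hm
  have hS : 0 < ea + eb := by linarith
  have hEa2 : Ea^2 = ea^2 + μ^2 := EE_sq μ _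
  have hEb2 : Eb^2 = eb^2 + μ^2 := EE_sq μ _
  have hEaμ : μ ≤ Ea := EE_ge_mu hμ.le _
  have hEbμ : μ ≤ Eb := EE_ge_mu hμ.le _
  have hEage : ea ≤ Ea := EE_ge_disp μ _
  have hEbge : eb ≤ Eb := EE_ge_disp μ _
  have hEale : Ea ≤ ea + μ := EE_le hμ.le _
  have hEble : Eb ≤ eb + μ := EE_le hμ.le _
  have heaub : ea ≤ fL * Λ := by
    have h := disp_le (μ := μ) (Λ := Λ) ha.le haΛ
    rw [← hfLdef] at h
    refine h.trans ?_
    rw [mul_comm fL Λ]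
    exact mul_le_mul_of_nonneg_right haΛ hfL.le
  have hebub : eb ≤ fL * Λ := by
    have h := disp_le (μ := μ) (Λ := Λ) hb.le hbΛ
    rw [← hfLdef] at h
    refine h.trans ?_
    rw [mul_comm fL Λ]
    exact mul_le_mul_of_nonneg_right hbΛ hfL.le
  have healb : sμ * ((t+s)/2) ≤ ea := disp_ge hμ ha.le
  have heblb : sμ * ((t-s)/2) ≤ eb := disp_ge hμ hb.le
  have hemlb : sμ * (t/2) ≤ em := disp_ge hμ hm.le
  have hemub : em ≤ (t/2) * fL := by
    have h := disp_le (μ := μ) (Λ := Λ) hm.le hmΛ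
    rw [← hfLdef] at h
    exact h
  have hSlb : sμ * t ≤ ea + eb := by linarith only [healb, heblb]
  -- Lipschitz facts
  have hlip1 : |eb - ea| ≤ Lc * k := by
    have h := disp_lip hμ hΛ ha.le hb.le haΛ hbΛ
    rw [← hfLdef, ← hsμdef, ← hLcdef, ← headef, ← hebdef] at h
    have h2 : |(t-s)/2 - (t+s)/2| = |s| := by
      rw [show (t-s)/2 - (t+s)/2 = -s by ring, abs_neg]
    rw [h2] at h
    exact h.trans (mul_le_mul_of_nonneg_left hsk hLc.le)
  have hlipa : |ea - em| ≤ Lc * (k/2) := by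
    have h := disp_lip hμ hΛ hm.le ha.le hmΛ haΛ
    rw [← hfLdef, ← hsμdef, ← hLcdef, ← headef, ← hemdef] at h
    have h2 : |(t+s)/2 - t/2| = |s|/2 := by
      rw [show (t+s)/2 - t/2 = s/2 by ring, abs_div]
      norm_num
    rw [h2] at h
    exact h.trans (mul_le_mul_of_nonneg_left (by linarith) hLc.le)
  have hlipb : |eb - em| ≤ Lc * (k/2) := by
    have h := disp_lip hμ hΛ hm.le hb.le hmΛ hbΛ
    rw [← hfLdef, ← hsμdef, ← hLcdef, ← hebdef, ← hemdef] at h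
    have h2 : |(t-s)/2 - t/2| = |s|/2 := by
      rw [show (t-s)/2 - t/2 = -(s/2) by ring, abs_neg, abs_div]
      norm_num
    rw [h2] at h
    exact h.trans (mul_le_mul_of_nonneg_left (by linarith) hLc.le)
  -- identity
  rw [bog_identity hμ ha hb, ← headef, ← hebdef]
  have hG : (Ea * Eb + ea * eb - μ^2) / (2*(ea*eb)) * ((t+s)/2) * ((t-s)/2) / (ea + eb)
      = (t+s)/2 * ((t-s)/2) / (ea + eb)
        + (Ea*Eb - ea*eb - μ^2) * ((t+s)/2) * ((t-s)/2) / (2*(ea*eb)*(ea+eb)) := by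
    field_simp
    ring
  rw [hG]
  set A := (t+s)/2 * ((t-s)/2) / (ea + eb) with hAdef
  set W := (Ea*Eb - ea*eb - μ^2) * ((t+s)/2) * ((t-s)/2) / (2*(ea*eb)*(ea+eb)) with hWdef
  set B := t^2/(8*em) with hBdef
  -- X and Z estimates
  have hXZ : (Ea*Eb - ea*eb - μ^2)*(Ea*Eb - ea*eb + μ^2) = (Ea*eb - Eb*ea)^2 := by
    linear_combination (Eb^2 - eb^2) * hEa2 + μ^2 * hEb2
  have hX0 : 0 ≤ Ea*Eb - ea*eb :=
    sub_nonneg.2 (mul_le_mul hEage hEbge heb.le (hea.le.trans hEage))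
  have hXμ : 0 ≤ Ea*Eb - ea*eb - μ^2 := by
    have h2 : 0 ≤ (Ea*Eb - ea*eb - μ^2)*(Ea*Eb - ea*eb + μ^2) := by
      rw [hXZ]; exact sq_nonneg _
    have h3 : 0 < Ea*Eb - ea*eb + μ^2 :=
      add_pos_of_nonneg_of_pos hX0 (by positivity)
    exact (mul_nonneg_iff_of_pos_right h3).1 h2
  have hEdiff : |Ea - Eb| * (2*μ) ≤ |eb - ea| * (2*fL*Λ) := by
    have heq : (Ea - Eb) * (Ea + Eb) = ea^2 - eb^2 := by
      linear_combination hEa2 - hEb2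
    have e1 : |Ea - Eb| * (Ea + Eb) = |ea^2 - eb^2| := by
      rw [← abs_of_nonneg (show (0:ℝ) ≤ Ea + Eb by linarith), ← abs_mul, heq]
    have e2 : |ea^2 - eb^2| = |eb - ea| * (ea + eb) := by
      rw [show ea^2 - eb^2 = (eb - ea) * (-(ea + eb)) by ring, abs_mul, abs_neg,
        abs_of_nonneg (show (0:ℝ) ≤ ea + eb by linarith)]
    calc |Ea - Eb| * (2*μ) ≤ |Ea - Eb| * (Ea + Eb) :=
          mul_le_mul_of_nonneg_left (by linarith) (abs_nonneg _)
      _ = |eb - ea| * (ea + eb) := by rw [e1, e2]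
      _ ≤ |eb - ea| * (2*fL*Λ) :=
          mul_le_mul_of_nonneg_left (by linarith) (abs_nonneg _)
  have hZub : |Ea*eb - Eb*ea| ≤ Cz * (Lc * k) := by
    have hZ1 : |Ea*eb - Eb*ea| ≤ Ea * |eb - ea| + ea * |Ea - Eb| := by
      calc |Ea*eb - Eb*ea| = |Ea*(eb - ea) + ea*(Ea - Eb)| := by
            rw [show Ea*eb - Eb*ea = Ea*(eb - ea) + ea*(Ea - Eb) by ring]
        _ ≤ |Ea*(eb - ea)| + |ea*(Ea - Eb)| := abs_add_le _ _
        _ = Ea * |eb - ea| + ea * |Ea - Eb| := by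
            rw [abs_mul, abs_mul, abs_of_nonneg (by linarith : (0:ℝ) ≤ Ea),
              abs_of_nonneg hea.le]
    have hE3 : μ * |Ea - Eb| ≤ fL*Λ*|eb - ea| := by linarith only [hEdiff]
    have h4 : μ * (Ea * |eb - ea|) ≤ μ*((fL*Λ + μ)*(Lc*k)) := by
      apply mul_le_mul_of_nonneg_left _ hμ.le
      exact mul_le_mul (by linarith) hlip1 (abs_nonneg _) (by positivity)
    have h5 : μ * (ea * |Ea - Eb|) ≤ fL*Λ*(fL*Λ*(Lc*k)) := by
      have s1 : ea * (μ * |Ea - Eb|) ≤ ea * (fL*Λ*|eb - ea|) :=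
        mul_le_mul_of_nonneg_left hE3 hea.le
      have s2 : ea * (fL*Λ*|eb - ea|) ≤ (fL*Λ)*(fL*Λ*(Lc*k)) := by
        apply mul_le_mul heaub _ (by positivity) (by positivity)
        exact mul_le_mul_of_nonneg_left hlip1 (by positivity)
      calc μ * (ea * |Ea - Eb|) = ea * (μ * |Ea - Eb|) := by ring
        _ ≤ ea * (fL*Λ*|eb - ea|) := s1
        _ ≤ fL*Λ*(fL*Λ*(Lc*k)) := s2
    have h6 : μ * |Ea*eb - Eb*ea| ≤ μ * (Ea * |eb - ea| + ea * |Ea - Eb|) :=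
      mul_le_mul_of_nonneg_left hZ1 hμ.le
    have hCzexp : μ * (Cz * (Lc * k)) = μ*((fL*Λ + μ)*(Lc*k)) + fL*Λ*(fL*Λ*(Lc*k)) := by
      rw [hCzdef]; field_simp
    have h7 : μ * |Ea*eb - Eb*ea| ≤ μ * (Cz * (Lc * k)) := by
      rw [hCzexp]
      calc μ * |Ea*eb - Eb*ea| ≤ μ * (Ea * |eb - ea| + ea * |Ea - Eb|) := h6
        _ = μ * (Ea * |eb - ea|) + μ * (ea * |Ea - Eb|) := by ring
        _ ≤ μ*((fL*Λ + μ)*(Lc*k)) + fL*Λ*(fL*Λ*(Lc*k)) := add_le_add h4 h5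
    exact (mul_le_mul_iff_right₀ hμ).1 h7
  have hXub : Ea*Eb - ea*eb - μ^2 ≤ (Cz*(Lc*k))^2/(2*μ^2) := by
    have hZ2 : (Ea*eb - Eb*ea)^2 ≤ (Cz*(Lc*k))^2 := by
      have h := pow_le_pow_left₀ (abs_nonneg (Ea*eb - Eb*ea)) hZub 2
      rwa [sq_abs] at h
    rw [le_div_iff₀ (by positivity)]
    have r1 : (Ea*Eb - ea*eb - μ^2) * (2*μ^2) ≤
        (Ea*Eb - ea*eb - μ^2)*(Ea*Eb - ea*eb + μ^2) :=
      mul_le_mul_of_nonneg_left (by linarith) hXμ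
    rw [hXZ] at r1
    exact r1.trans hZ2
  -- bound W
  have hW0 : 0 ≤ W := by
    rw [hWdef]
    apply div_nonneg _ (by positivity)
    exact mul_nonneg (mul_nonneg hXμ ha.le) hb.le
  have hWub : W ≤ Cz^2*Lc^2/(4*μ^3*sμ) * k := by
    have hab : μ * ((t+s)/2 * ((t-s)/2)) ≤ ea * eb := by
      have m1 : (sμ*((t+s)/2)) * (sμ*((t-s)/2)) ≤ ea * eb :=
        mul_le_mul healb heblb (by positivity) hea.le
      have m2 : (sμ*((t+s)/2)) * (sμ*((t-s)/2)) = sμ^2 * ((t+s)/2 * ((t-s)/2)) := by ring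
      rw [m2, hsμ2] at m1
      exact m1
    have hBden : (0:ℝ) < 2*(μ*((t+s)/2 * ((t-s)/2)))*(sμ*t) := by positivity
    have hstep : W ≤ ((Cz*(Lc*k))^2/(2*μ^2) * ((t+s)/2) * ((t-s)/2))
        / (2*(μ*((t+s)/2 * ((t-s)/2)))*(sμ*t)) := by
      rw [hWdef]
      apply div_le_div₀ (by positivity) _ hBden _
      · exact mul_le_mul_of_nonneg_right (mul_le_mul_of_nonneg_right hXub ha.le) hb.le
      · have m3 : (μ*((t+s)/2 * ((t-s)/2)))*(sμ*t) ≤ (ea*eb)*(ea+eb) :=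
          mul_le_mul hab hSlb (by positivity) (mul_pos hea heb).le
        calc 2*(μ*((t+s)/2 * ((t-s)/2)))*(sμ*t)
            = 2*((μ*((t+s)/2 * ((t-s)/2)))*(sμ*t)) := by ring
          _ ≤ 2*((ea*eb)*(ea+eb)) := by linarith
          _ = 2*(ea*eb)*(ea+eb) := by ring
    refine hstep.trans ?_
    rw [div_le_iff₀ hBden]
    have hexp : Cz^2*Lc^2/(4*μ^3*sμ) * k * (2*(μ*((t+s)/2 * ((t-s)/2)))*(sμ*t))
        = Cz^2*Lc^2/(2*μ^2) * (((t+s)/2 * ((t-s)/2)) * (k*t)) := by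
      field_simp
      ring
    rw [hexp]
    have h6 : (Cz*(Lc*k))^2/(2*μ^2) = Cz^2*Lc^2/(2*μ^2) * k^2 := by
      field_simp
    rw [h6]
    have h7 : (0:ℝ) ≤ Cz^2*Lc^2/(2*μ^2) := by positivity
    have h8 : (0:ℝ) ≤ Cz^2*Lc^2/(2*μ^2) * (((t+s)/2 * ((t-s)/2)) * (k*(t-k))) := by
      apply mul_nonneg h7
      apply mul_nonneg (mul_pos ha hb).le
      exact mul_nonneg hk.le (by linarith)
    linarith only [h8]
  -- bound T1
  have hT1 : |A - B| ≤ (fL/(4*μ) + Lc/(4*μ)) * k := by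
    have hrw : A - B = (((t+s)/2 * ((t-s)/2) - t^2/4)*(2*em)
        + (t^2/4)*((2*em) - (ea+eb))) / ((ea+eb)*(2*em)) := by
      rw [hAdef, hBdef]
      field_simp
      ring
    have hdenpos : (0:ℝ) < (ea+eb)*(2*em) := by positivity
    have p1 : |(t+s)/2 * ((t-s)/2) - t^2/4| ≤ k^2/4 := by
      rw [show (t+s)/2 * ((t-s)/2) - t^2/4 = -(s^2/4) by ring, abs_neg,
        abs_of_nonneg (by positivity)]
      have h := sq_le_sq' (by linarith : -k ≤ s) hs2
      linarith only [h]
    have p2 : (0:ℝ) < 2*em := by linarith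
    have p3 : 2*em ≤ fL*t := by
      have h : (t/2)*fL = fL*t/2 := by ring
      linarith only [hemub, h]
    have p4 : |(2*em) - (ea+eb)| ≤ Lc * k := by
      rw [show (2*em) - (ea+eb) = (em - ea) + (em - eb) by ring]
      calc |(em - ea) + (em - eb)| ≤ |em - ea| + |em - eb| := abs_add_le _ _
        _ ≤ Lc * (k/2) + Lc * (k/2) := by
            rw [abs_sub_comm em ea, abs_sub_comm em eb]
            exact add_le_add hlipa hlipb
        _ = Lc * k := by ring
    have hnum : |((t+s)/2 * ((t-s)/2) - t^2/4)*(2*em) + (t^2/4)*((2*em) - (ea+eb))|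
        ≤ (k^2/4)*(fL*t) + (t^2/4)*(Lc*k) := by
      calc |((t+s)/2 * ((t-s)/2) - t^2/4)*(2*em) + (t^2/4)*((2*em) - (ea+eb))|
          ≤ |((t+s)/2 * ((t-s)/2) - t^2/4)*(2*em)| + |(t^2/4)*((2*em) - (ea+eb))| :=
            abs_add_le _ _
        _ = |(t+s)/2 * ((t-s)/2) - t^2/4| * (2*em) + (t^2/4) * |(2*em) - (ea+eb)| := by
            rw [abs_mul ((t+s)/2 * ((t-s)/2) - t^2/4) (2*em),
              abs_mul (t^2/4) ((2*em) - (ea+eb)), abs_of_nonneg p2.le,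
              abs_of_nonneg (by positivity : (0:ℝ) ≤ t^2/4)]
        _ ≤ (k^2/4)*(fL*t) + (t^2/4)*(Lc*k) := by
            have q1 : |(t+s)/2 * ((t-s)/2) - t^2/4| * (2*em) ≤ (k^2/4)*(fL*t) :=
              mul_le_mul p1 p3 p2.le (by positivity)
            have q2 : (t^2/4) * |(2*em) - (ea+eb)| ≤ (t^2/4)*(Lc*k) :=
              mul_le_mul_of_nonneg_left p4 (by positivity)
            linarith
    have hden : μ*t^2 ≤ (ea+eb)*(2*em) := by
      have d1 : sμ*t ≤ 2*em := by linarith only [hemlb]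
      have d2 : (sμ*t)*(sμ*t) ≤ (ea+eb)*(2*em) :=
        mul_le_mul hSlb d1 (by positivity) hS.le
      have d3 : (sμ*t)*(sμ*t) = μ*t^2 := by
        rw [show (sμ*t)*(sμ*t) = sμ^2*t^2 by ring, hsμ2]
      linarith only [d2, d3]
    rw [hrw, abs_div, abs_of_pos hdenpos]
    have step : |((t+s)/2 * ((t-s)/2) - t^2/4)*(2*em) + (t^2/4)*((2*em) - (ea+eb))|
        / ((ea+eb)*(2*em)) ≤ ((k^2/4)*(fL*t) + (t^2/4)*(Lc*k)) / (μ*t^2) :=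
      div_le_div₀ (by positivity) hnum (by positivity) hden
    refine step.trans ?_
    rw [div_le_iff₀ (by positivity)]
    have hexp2 : (fL/(4*μ) + Lc/(4*μ)) * k * (μ*t^2) = fL*(k*t^2)/4 + Lc*(k*t^2)/4 := by
      field_simp
    rw [hexp2]
    have h9 : (0:ℝ) ≤ fL*k*(t*(t-k)) := by
      apply mul_nonneg (mul_nonneg hfL.le hk.le)
      exact mul_nonneg ht.le (by linarith)
    linarith only [h9]
  -- combine
  calc |A + W - B| ≤ |A - B| + |W| := by
        rw [show A + W - B = (A - B) + W by ring]
        exact abs_add_le _ _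
    _ ≤ (fL/(4*μ) + Lc/(4*μ)) * k + Cz^2*Lc^2/(4*μ^3*sμ) * k := by
        rw [abs_of_nonneg hW0]
        exact add_le_add hT1 hWub
    _ = (fL/(4*μ) + Lc/(4*μ) + Cz^2*Lc^2/(4*μ^3*sμ)) * k := by ring

lemma measurable_disp (μ : ℝ) : Measurable (disp μ) := by
  unfold disp
  exact (Real.continuous_sqrt.comp (by continuity)).measurable

lemma measurable_sig (μ : ℝ) : Measurable (sig μ) := by
  unfold sig
  apply Measurable.sqrt
  exact ((((measurable_disp μ).pow_const 2).add measurable_const).sqrt.add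
    (measurable_disp μ)).div (measurable_const.mul (measurable_disp μ))

lemma measurable_gam (μ : ℝ) : Measurable (gam μ) := by
  unfold gam
  apply Measurable.sqrt
  exact ((((measurable_disp μ).pow_const 2).add measurable_const).sqrt.sub
    (measurable_disp μ)).div (measurable_const.mul (measurable_disp μ))

lemma measurable_H (μ k : ℝ) : Measurable (fun q : ℝ × ℝ =>
    (sig μ ((q.1+q.2)/2) * sig μ ((q.1-q.2)/2) - gam μ ((q.1+q.2)/2) * gam μ ((q.1-q.2)/2))^2
        * ((q.1+q.2)/2) * ((q.1-q.2)/2)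
      / (8*k*(disp μ ((q.1+q.2)/2) + disp μ ((q.1-q.2)/2)))) := by
  have m1 : Measurable (fun q : ℝ×ℝ => (q.1+q.2)/2) :=
    (measurable_fst.add measurable_snd).div_const 2
  have m2 : Measurable (fun q : ℝ×ℝ => (q.1-q.2)/2) :=
    (measurable_fst.sub measurable_snd).div_const 2
  have hsg := measurable_sig μ
  have hgm := measurable_gam μ
  have hds := measurable_disp μ
  exact (((((hsg.comp m1).mul (hsg.comp m2)).sub
      ((hgm.comp m1).mul (hgm.comp m2))).pow_const 2).mul m1 |>.mul m2).div
    (measurable_const.mul ((hds.comp m1).add (hds.comp m2)))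

set_option maxHeartbeats 2000000 in
theorem stmt19 (μ Λ : ℝ) (hμ : 0 < μ) (hΛ : 0 < Λ) :
    Tendsto (fun k => ∫ t in k..Λ, ∫ s in (-k)..k,
        (sig μ ((t+s)/2) * sig μ ((t-s)/2) - gam μ ((t+s)/2) * gam μ ((t-s)/2))^2
            * ((t+s)/2) * ((t-s)/2)
          / (8*k*(disp μ ((t+s)/2) + disp μ ((t-s)/2))))
      (𝓝[>] (0:ℝ))
      (𝓝 (∫ t in (0:ℝ)..Λ, t^2 / (32 * disp μ (t/2)))) ∧
    IntervalIntegrable (fun t => t^2 / (32 * disp μ (t/2)))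
      MeasureTheory.volume 0 Λ ∧
    0 < ∫ t in (0:ℝ)..Λ, t^2 / (32 * disp μ (t/2)) := by
  obtain ⟨C, hC, hcore⟩ := core μ Λ hμ hΛ
  have hsμ : 0 < Real.sqrt μ := Real.sqrt_pos.2 hμ
  set gh : ℝ → ℝ := fun t => t/(16*Real.sqrt (μ + t^2/16)) with hghdef
  have hghc : Continuous gh := by
    apply Continuous.div continuous_id
    · continuity
    · intro t; positivity
  have heq' : ∀ t ∈ Set.Icc (0:ℝ) Λ, t^2 / (32 * disp μ (t/2)) = gh t := by
    intro t ht
    obtain ⟨ht0, htΛ⟩ := ht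
    have h2 : (0:ℝ) ≤ t/2 := by linarith
    simp only [hghdef]
    rw [disp_eq μ h2, show μ + (t/2)^2/4 = μ + t^2/16 by ring]
    rcases eq_or_lt_of_le ht0 with h|h
    · rw [← h]; norm_num
    · have hc : 0 < Real.sqrt (μ + t^2/16) := Real.sqrt_pos.2 (by positivity)
      field_simp
      ring
  have heq : Set.EqOn (fun t => t^2 / (32 * disp μ (t/2))) gh (Set.Icc 0 Λ) := heq'
  have hgInt : IntervalIntegrable (fun t => t^2 / (32 * disp μ (t/2))) volume 0 Λ := by
    apply ContinuousOn.intervalIntegrable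
    rw [Set.uIcc_of_le hΛ.le]
    exact hghc.continuousOn.congr heq
  have hgub : ∀ t ∈ Set.Ioc (0:ℝ) Λ, |t^2 / (32 * disp μ (t/2))| ≤ Λ/(16*Real.sqrt μ) := by
    rintro t ⟨ht0, htΛ⟩
    rw [heq' t (Set.mem_Icc.2 ⟨ht0.le, htΛ⟩)]
    have h1 : Real.sqrt μ ≤ Real.sqrt (μ + t^2/16) := Real.sqrt_le_sqrt (by nlinarith)
    have h2 : (0:ℝ) < Real.sqrt (μ + t^2/16) := lt_of_lt_of_le hsμ h1
    simp only [hghdef]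
    rw [abs_of_nonneg (by positivity)]
    exact div_le_div₀ (by positivity) htΛ (by positivity) (by linarith)
  refine ⟨?_, hgInt, ?_⟩
  · -- the limit
    have hbound : ∀ᶠ k in 𝓝[>] (0:ℝ),
        ‖(∫ t in k..Λ, ∫ s in (-k)..k,
            (sig μ ((t+s)/2) * sig μ ((t-s)/2) - gam μ ((t+s)/2) * gam μ ((t-s)/2))^2
                * ((t+s)/2) * ((t-s)/2)
              / (8*k*(disp μ ((t+s)/2) + disp μ ((t-s)/2))))
          - ∫ t in (0:ℝ)..Λ, t^2 / (32 * disp μ (t/2))‖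
        ≤ (C*Λ/4 + Λ/(16*Real.sqrt μ)) * k := by
      filter_upwards [Ioo_mem_nhdsGT_of_mem (Set.mem_Ico.2 ⟨le_refl (0:ℝ), hΛ⟩)]
        with k hkmem
      obtain ⟨hk0, hkΛ⟩ := hkmem
      set H : ℝ → ℝ → ℝ := fun t s =>
        (sig μ ((t+s)/2) * sig μ ((t-s)/2) - gam μ ((t+s)/2) * gam μ ((t-s)/2))^2
            * ((t+s)/2) * ((t-s)/2)
          / (8*k*(disp μ ((t+s)/2) + disp μ ((t-s)/2))) with hHdef
      show ‖(∫ t in k..Λ, ∫ s in (-k)..k, H t s)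
          - ∫ t in (0:ℝ)..Λ, t^2 / (32 * disp μ (t/2))‖
        ≤ (C*Λ/4 + Λ/(16*Real.sqrt μ)) * k
      have hmeasH := measurable_H μ k
      have hHtmeas : ∀ t : ℝ, Measurable (H t) := fun t =>
        hmeasH.comp (f := fun s : ℝ => ((t, s) : ℝ × ℝ))
          ((measurable_const (a := t)).prodMk measurable_id)
      have hpt : ∀ t ∈ Set.Ioc k Λ, ∀ s ∈ Set.uIoc (-k) k,
          |H t s - t^2 / (32 * disp μ (t/2))/(2*k)| ≤ C/8 := by
        intro t ht s hs
        rw [Set.uIoc_of_le (by linarith : -k ≤ k)] at hs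
        obtain ⟨hs1, hs2⟩ := hs
        obtain ⟨hkt, htΛ⟩ := ht
        have hcore' := hcore k t s hk0 hkt htΛ hs1 hs2
        have e1 : H t s = ((sig μ ((t+s)/2) * sig μ ((t-s)/2)
              - gam μ ((t+s)/2) * gam μ ((t-s)/2))^2
            * ((t+s)/2) * ((t-s)/2) / (disp μ ((t+s)/2) + disp μ ((t-s)/2)))/(8*k) := by
          rw [hHdef]
          exact div_mul_eq_div_div_swap _ _ _
        have e2 : t^2 / (32 * disp μ (t/2))/(2*k) = (t^2/(8 * disp μ (t/2)))/(8*k) := by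
          rw [div_div, div_div, show 32 * disp μ (t/2)*(2*k) = 8 * disp μ (t/2)*(8*k) by ring]
        rw [e1, e2, div_sub_div_same, abs_div,
          abs_of_pos (by linarith : (0:ℝ) < 8*k), div_le_iff₀ (by linarith : (0:ℝ) < 8*k)]
        exact hcore'.trans (le_of_eq (by ring))
      have hHint : ∀ t ∈ Set.Ioc k Λ, IntervalIntegrable (H t) volume (-k) k := by
        intro t ht
        rw [intervalIntegrable_iff, Set.uIoc_of_le (by linarith : -k ≤ k)]
        apply Integrable.mono'
          ((integrableOn_const_iff (C := |t^2 / (32 * disp μ (t/2))/(2*k)| + C/8)).2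
            (Or.inr measure_Ioc_lt_top))
          ((hHtmeas t).aestronglyMeasurable.restrict)
        filter_upwards [ae_restrict_mem measurableSet_Ioc] with s hs
        have h1 := hpt t ht s (by rwa [Set.uIoc_of_le (by linarith : -k ≤ k)])
        rw [Real.norm_eq_abs]
        have h3 := abs_add_le (H t s - t^2 / (32 * disp μ (t/2))/(2*k))
          (t^2 / (32 * disp μ (t/2))/(2*k))
        rw [sub_add_cancel] at h3
        linarith
      have hinner : ∀ t ∈ Set.Ioc k Λ,
          |(∫ s in (-k)..k, H t s) - t^2 / (32 * disp μ (t/2))| ≤ C/8*(2*k) := by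
        intro t ht
        have hconst : (∫ s in (-k)..k, t^2 / (32 * disp μ (t/2))/(2*k))
            = t^2 / (32 * disp μ (t/2)) := by
          rw [intervalIntegral.integral_const, show k - -k = 2*k by ring, smul_eq_mul,
            mul_comm, div_mul_cancel₀ _ (ne_of_gt (by linarith : (0:ℝ) < 2*k))]
        rw [← hconst, ← intervalIntegral.integral_sub (hHint t ht)
          intervalIntegrable_const]
        have hb := intervalIntegral.norm_integral_le_of_norm_le_const
          (C := C/8) (a := -k) (b := k)
          (f := fun s => H t s - t^2 / (32 * disp μ (t/2))/(2*k))
          (fun s hs => by rw [Real.norm_eq_abs]; exact hpt t ht s hs)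
        rw [Real.norm_eq_abs, show k - -k = 2*k by ring,
          abs_of_pos (by linarith : (0:ℝ) < 2*k)] at hb
        exact hb
      have hinnermeas : Measurable (fun t => ∫ s in (-k)..k, H t s) := by
        have e3 : (fun t => ∫ s in (-k)..k, H t s)
            = fun t => ∫ s in Set.Ioc (-k) k, H t s ∂volume := by
          funext t
          exact intervalIntegral.integral_of_le (by linarith)
        rw [e3]
        exact (hmeasH.stronglyMeasurable.integral_prod_right').measurable
      have hinnerInt : IntervalIntegrable (fun t => ∫ s in (-k)..k, H t s)
          volume k Λ := by
        rw [intervalIntegrable_iff, Set.uIoc_of_le hkΛ.le]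
        apply Integrable.mono'
          ((integrableOn_const_iff (C := Λ/(16*Real.sqrt μ) + C/8*(2*k))).2
            (Or.inr measure_Ioc_lt_top))
          hinnermeas.aestronglyMeasurable.restrict
        filter_upwards [ae_restrict_mem measurableSet_Ioc] with t htmem
        have h1 := hinner t htmem
        have h2 := hgub t ⟨hk0.trans htmem.1, htmem.2⟩
        rw [Real.norm_eq_abs]
        have h3 := abs_add_le ((∫ s in (-k)..k, H t s) - t^2 / (32 * disp μ (t/2)))
          (t^2 / (32 * disp μ (t/2)))
        rw [sub_add_cancel] at h3
        linarith
      have hgk1 : IntervalIntegrable (fun t => t^2 / (32 * disp μ (t/2))) volume 0 k :=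
        hgInt.mono_set (by
          rw [Set.uIcc_of_le hk0.le, Set.uIcc_of_le hΛ.le]
          exact Set.Icc_subset_Icc le_rfl hkΛ.le)
      have hgk2 : IntervalIntegrable (fun t => t^2 / (32 * disp μ (t/2))) volume k Λ :=
        hgInt.mono_set (by
          rw [Set.uIcc_of_le hkΛ.le, Set.uIcc_of_le hΛ.le]
          exact Set.Icc_subset_Icc hk0.le le_rfl)
      have hsplit := intervalIntegral.integral_add_adjacent_intervals hgk1 hgk2
      have hdiff := intervalIntegral.integral_sub hinnerInt hgk2
      have h1 : ‖∫ t in k..Λ, ((∫ s in (-k)..k, H t s) - t^2 / (32 * disp μ (t/2)))‖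
          ≤ C/8*(2*k) * |Λ - k| :=
        intervalIntegral.norm_integral_le_of_norm_le_const (fun t htmem => by
          rw [Set.uIoc_of_le hkΛ.le] at htmem
          rw [Real.norm_eq_abs]
          exact hinner t htmem)
      have h2 : ‖∫ t in (0:ℝ)..k, t^2 / (32 * disp μ (t/2))‖
          ≤ Λ/(16*Real.sqrt μ) * |k - 0| :=
        intervalIntegral.norm_integral_le_of_norm_le_const (fun t htmem => by
          rw [Set.uIoc_of_le hk0.le] at htmem
          rw [Real.norm_eq_abs]
          exact hgub t ⟨htmem.1, htmem.2.trans hkΛ.le⟩)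
      have e4 : (∫ t in k..Λ, ∫ s in (-k)..k, H t s)
          - (∫ t in (0:ℝ)..Λ, t^2 / (32 * disp μ (t/2)))
          = (∫ t in k..Λ, ((∫ s in (-k)..k, H t s) - t^2 / (32 * disp μ (t/2))))
            - ∫ t in (0:ℝ)..k, t^2 / (32 * disp μ (t/2)) := by
        rw [hdiff, ← hsplit]
        ring
      rw [Real.norm_eq_abs, e4]
      rw [Real.norm_eq_abs] at h1 h2
      have e5 : |Λ - k| = Λ - k := abs_of_pos (by linarith)
      have e6 : |k - 0| = k := by rw [sub_zero, abs_of_pos hk0]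
      rw [e5] at h1
      rw [e6] at h2
      have e7 : C/8*(2*k)*(Λ - k) ≤ C*Λ/4*k := by
        have h8 : (0:ℝ) ≤ C*(k*k) := by positivity
        linarith only [h8, mul_le_mul_of_nonneg_left hkΛ.le
          (by positivity : (0:ℝ) ≤ C/8*(2*k))]
      calc |(∫ t in k..Λ, ((∫ s in (-k)..k, H t s) - t^2 / (32 * disp μ (t/2))))
            - ∫ t in (0:ℝ)..k, t^2 / (32 * disp μ (t/2))|
          ≤ |∫ t in k..Λ, ((∫ s in (-k)..k, H t s) - t^2 / (32 * disp μ (t/2)))|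
            + |∫ t in (0:ℝ)..k, t^2 / (32 * disp μ (t/2))| := abs_sub _ _
        _ ≤ (C*Λ/4 + Λ/(16*Real.sqrt μ)) * k := by
            have := (mul_le_mul_of_nonneg_left hkΛ.le (le_of_lt hk0))
            linarith [h1, h2, e7]
    have htz : Tendsto (fun k : ℝ => (C*Λ/4 + Λ/(16*Real.sqrt μ)) * k)
        (𝓝[>] (0:ℝ)) (𝓝 0) := by
      have h : Tendsto (fun k : ℝ => (C*Λ/4 + Λ/(16*Real.sqrt μ)) * k)
          (𝓝 (0:ℝ)) (𝓝 ((C*Λ/4 + Λ/(16*Real.sqrt μ)) * 0)) :=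
        (continuous_const.mul continuous_id).tendsto 0
      rw [mul_zero] at h
      exact h.mono_left nhdsWithin_le_nhds
    have hzero := squeeze_zero_norm' hbound htz
    have hfinal := hzero.add_const (∫ t in (0:ℝ)..Λ, t^2 / (32 * disp μ (t/2)))
    simpa only [sub_add_cancel, zero_add] using hfinal
  · rw [intervalIntegral.integral_congr (g := gh)
      (by rw [Set.uIcc_of_le hΛ.le]; exact heq)]
    apply intervalIntegral.intervalIntegral_pos_of_pos_on (hghc.intervalIntegrable 0 Λ) _ hΛ
    intro x hx
    simp only [hghdef]
    exact div_pos hx.1 (by positivity)
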